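/- Let (X,d) be a distance space such that (T_d,d∞) is a metric space (T_d is non-empty and d∞(f,g) < ∞ for all f,g ∈ T_d). Let K := ⋃_{x∈X} κ(x) ⊆ T_d with the metric d∞, and let T_K be the metric tight span of (K,d∞), i.e., the set of ⪯-minimal elements of P_K := {F : K → ℝ : F(k₁) + F(k₂) ≥ d∞(k₁,k₂) for all k₁,k₂ ∈ K}. Then the map ψ : T_d → ℝ^K defined by ψ(f)(k) = d∞(f,k) maps T_d bijectively onto T_K and satisfies d∞(ψ(f),ψ(g)) = d∞(f,g) for all f,g ∈ T_d; in particular (T_d,d∞) is isometric to (T_K,d∞). -/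
import Mathlib


open scoped ENNReal

section CoreDefs

variable {Y : Type*}

/-- A distance space: symmetric, nonnegative, vanishing on the diagonal. -/
def IsDistance (d : Y → Y → ℝ) : Prop :=
  (∀ x y, 0 ≤ d x y) ∧ (∀ x y, d x y = d y x) ∧ ∀ x, d x x = 0

/-- The set `P_d` of functions dominating the distance `d`. -/
def Pd (d : Y → Y → ℝ) : Set (Y → ℝ) :=
  {f | ∀ x y, d x y ≤ f x + f y}

/-- The tight span `T_d`: pointwise-minimal elements of `P_d`. -/
def Td (d : Y → Y → ℝ) : Set (Y → ℝ) :=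
  {f | f ∈ Pd d ∧ ∀ g ∈ Pd d, g ≤ f → g = f}

/-- The sup-distance `d∞(f,g) = sup_x |f x - g x|`, valued in `[0,∞]`. -/
noncomputable def dInfty (f g : Y → ℝ) : ℝ≥0∞ :=
  ⨆ y, edist (f y) (g y)

/-- `κ(x) = {f ∈ T_d : f x = 0}`. -/
def kappa (d : Y → Y → ℝ) (x : Y) : Set (Y → ℝ) :=
  {f | f ∈ Td d ∧ f x = 0}

/-- A pseudometric: symmetric, nonnegative, vanishing on the diagonal,
satisfying the triangle inequality. -/
def IsPseudometric (ρ : Y → Y → ℝ) : Prop :=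
  (∀ x y, 0 ≤ ρ x y) ∧ (∀ x y, ρ x y = ρ y x) ∧ (∀ x, ρ x x = 0) ∧
  ∀ x y z, ρ x z ≤ ρ x y + ρ y z

/-- `M(d)`: the set of pseudometrics dominating `d`. -/
def Md (d : Y → Y → ℝ) : Set (Y → Y → ℝ) :=
  {ρ | IsPseudometric ρ ∧ ∀ x y, d x y ≤ ρ x y}

end CoreDefs

section KDefs

variable {Y : Type*}

/-- `K = ⋃_{x ∈ X} κ(x)`. -/
def Kset (d : Y → Y → ℝ) : Set (Y → ℝ) := ⋃ x : Y, kappa d x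

/-- `P_K` for the metric space `(K, d∞)`. -/
def PK (d : Y → Y → ℝ) : Set (↥(Kset d) → ℝ) :=
  {F | ∀ k₁ k₂ : ↥(Kset d),
    (dInfty (k₁ : Y → ℝ) (k₂ : Y → ℝ)).toReal ≤ F k₁ + F k₂}

/-- The metric tight span `T_K` of `(K, d∞)`. -/
def TK (d : Y → Y → ℝ) : Set (↥(Kset d) → ℝ) :=
  {F | F ∈ PK d ∧ ∀ G ∈ PK d, G ≤ F → G = F}

/-- The map `ψ : T_d → ℝ^K`, `ψ(f)(k) = d∞(f,k)`. -/
noncomputable def psiK (d : Y → Y → ℝ) (f : Y → ℝ) : ↥(Kset d) → ℝ :=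
  fun k => (dInfty f (k : Y → ℝ)).toReal

end KDefs

section AuxLemmas

variable {Y : Type*}

lemma Pd_nonneg {d : Y → Y → ℝ} (hdiag : ∀ x, d x x = 0) {f : Y → ℝ} (hf : f ∈ Pd d) (x : Y) :
    0 ≤ f x := by
  have h := hf x x
  rw [hdiag x] at h
  linarith

lemma mem_Td_of_extremal {d : Y → Y → ℝ} (hdiag : ∀ x, d x x = 0) {f : Y → ℝ}
    (hf : f ∈ Pd d)
    (hext : ∀ x : Y, ∀ ε : ℝ, 0 < ε → f x < ε ∨ ∃ y, f x + f y < d x y + ε) :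
    f ∈ Td d := by
  refine ⟨hf, fun g hg hgf => ?_⟩
  funext x
  by_contra hne
  have hlt : g x < f x := lt_of_le_of_ne (hgf x) hne
  rcases hext x (f x - g x) (by linarith) with h | ⟨y, hy⟩
  · have := Pd_nonneg hdiag hg x
    linarith
  · have h1 := hg x y
    have h2 := hgf y
    linarith

lemma extremal_of_mem_Td {d : Y → Y → ℝ} (hdiag : ∀ x, d x x = 0)
    (hsymm : ∀ x y, d x y = d y x) {f : Y → ℝ} (hf : f ∈ Td d) :
    ∀ x : Y, ∀ ε : ℝ, 0 < ε → f x < ε ∨ ∃ y, f x + f y < d x y + ε := by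
  intro x ε hε
  by_contra hcon
  push_neg at hcon
  obtain ⟨hfx, hall⟩ := hcon
  classical
  set g : Y → ℝ := fun y => if y = x then f x - ε else f y with hgdef
  have hgPd : g ∈ Pd d := by
    intro y z
    by_cases hy : y = x <;> by_cases hz : z = x
    · subst hy; subst hz
      simp only [hgdef, if_pos rfl]
      rw [hdiag]
      linarith
    · subst hy
      simp only [hgdef, if_pos rfl, if_neg hz]
      have := hall z
      linarith
    · subst hz
      simp only [hgdef, if_pos rfl, if_neg hy]
      have := hall y
      rw [hsymm y z]
      linarith
    · simp only [hgdef, if_neg hy, if_neg hz]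
      exact hf.1 y z
  have hgle : g ≤ f := by
    intro y
    by_cases hy : y = x
    · subst hy; simp only [hgdef, if_pos rfl]; linarith
    · simp only [hgdef, if_neg hy]; exact le_rfl
  have heq := hf.2 g hgPd hgle
  have hx := congrFun heq x
  simp only [hgdef, if_pos rfl] at hx
  linarith

lemma exists_Td_le {d : Y → Y → ℝ} (hdiag : ∀ x, d x x = 0) {p : Y → ℝ}
    (hp : p ∈ Pd d) : ∃ f, f ∈ Td d ∧ f ≤ p := by
  classical
  set s : Set ((Y → ℝ)ᵒᵈ) :=
    {g | OrderDual.ofDual g ∈ Pd d ∧ OrderDual.ofDual g ≤ p} with hs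
  have key : ∀ c ⊆ s, IsChain (· ≤ ·) c → ∀ y ∈ c, ∃ ub ∈ s, ∀ z ∈ c, z ≤ ub := by
    intro c hcs hc y hy
    set h : Y → ℝ := fun a => sInf ((fun g : (Y → ℝ)ᵒᵈ => OrderDual.ofDual g a) '' c) with hh
    have hbdd : ∀ a : Y, BddBelow ((fun g : (Y → ℝ)ᵒᵈ => OrderDual.ofDual g a) '' c) := by
      intro a
      refine ⟨0, ?_⟩
      rintro r ⟨g, hg, rfl⟩
      exact Pd_nonneg hdiag (hcs hg).1 a
    have hnem : ∀ a : Y, ((fun g : (Y → ℝ)ᵒᵈ => OrderDual.ofDual g a) '' c).Nonempty :=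
      fun a => ⟨_, Set.mem_image_of_mem _ hy⟩
    have hle : ∀ g ∈ c, ∀ a, h a ≤ OrderDual.ofDual g a := by
      intro g hg a
      exact csInf_le (hbdd a) (Set.mem_image_of_mem _ hg)
    have hPd : h ∈ Pd d := by
      intro a b
      have key2 : ∀ g₁ ∈ c, ∀ g₂ ∈ c,
          d a b ≤ OrderDual.ofDual g₁ a + OrderDual.ofDual g₂ b := by
        intro g₁ h₁ g₂ h₂
        rcases hc.total h₁ h₂ with h12 | h21
        · have h12' : OrderDual.ofDual g₂ ≤ OrderDual.ofDual g₁ := h12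
          linarith [(hcs h₂).1 a b, h12' a]
        · have h21' : OrderDual.ofDual g₁ ≤ OrderDual.ofDual g₂ := h21
          linarith [(hcs h₁).1 a b, h21' b]
      have h1 : d a b - h b ≤ h a := by
        apply le_csInf (hnem a)
        rintro r ⟨g₁, hg₁, rfl⟩
        have h2 : d a b - OrderDual.ofDual g₁ a ≤ h b := by
          apply le_csInf (hnem b)
          rintro r ⟨g₂, hg₂, rfl⟩
          linarith [key2 g₁ hg₁ g₂ hg₂]
        simp only []
        linarith
      linarith
    refine ⟨OrderDual.toDual h, ⟨hPd, ?_⟩, ?_⟩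
    · intro a
      exact (hle y hy a).trans ((hcs hy).2 a)
    · intro z hz
      intro a
      exact hle z hz a
  obtain ⟨m, hpm, hmax⟩ := zorn_le_nonempty₀ s key (OrderDual.toDual p) ⟨hp, le_rfl⟩
  refine ⟨OrderDual.ofDual m, ⟨hmax.1.1, fun g hg hgm => ?_⟩, hmax.1.2⟩
  have hgs : OrderDual.toDual g ∈ s := ⟨hg, hgm.trans hmax.1.2⟩
  have h2 : OrderDual.toDual g ≤ m := hmax.2 hgs (hgm : m ≤ OrderDual.toDual g)
  exact le_antisymm hgm (h2 : OrderDual.ofDual m ≤ g)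

lemma dInfty_symm (f g : Y → ℝ) : dInfty f g = dInfty g f := by
  unfold dInfty
  simp_rw [edist_comm]

lemma edist_le_dInfty (f g : Y → ℝ) (y : Y) : edist (f y) (g y) ≤ dInfty f g :=
  le_iSup (fun y => edist (f y) (g y)) y

lemma dInfty_le_of_forall {f g : Y → ℝ} {c : ℝ≥0∞} (h : ∀ y, edist (f y) (g y) ≤ c) :
    dInfty f g ≤ c := iSup_le h

lemma dInfty_triangle (f g h : Y → ℝ) : dInfty f h ≤ dInfty f g + dInfty g h := by
  refine dInfty_le_of_forall fun y => (edist_triangle (f y) (g y) (h y)).trans ?_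
  exact add_le_add (edist_le_dInfty f g y) (edist_le_dInfty g h y)

lemma dInfty_le_ofReal {f g : Y → ℝ} {c : ℝ} (h : ∀ y, |f y - g y| ≤ c) :
    dInfty f g ≤ ENNReal.ofReal c := by
  refine dInfty_le_of_forall fun y => ?_
  rw [edist_dist, Real.dist_eq]
  exact ENNReal.ofReal_le_ofReal (h y)

lemma abs_le_toReal_dInfty {f g : Y → ℝ} (hfin : dInfty f g ≠ ⊤) (y : Y) :
    |f y - g y| ≤ (dInfty f g).toReal := by
  have h := edist_le_dInfty f g y
  rw [edist_dist, Real.dist_eq] at h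
  have h2 := ENNReal.toReal_mono hfin h
  rwa [ENNReal.toReal_ofReal (abs_nonneg _)] at h2

lemma toReal_triangle {a b c : ℝ≥0∞} (h : a ≤ b + c) (hb : b ≠ ⊤) (hc : c ≠ ⊤) :
    a.toReal ≤ b.toReal + c.toReal := by
  have hbc : b + c ≠ ⊤ := ENNReal.add_ne_top.2 ⟨hb, hc⟩
  have h2 := ENNReal.toReal_mono hbc h
  rwa [ENNReal.toReal_add hb hc] at h2

end AuxLemmas

section MoreAux

variable {Y : Type*}

/-- For every `g ∈ T_d` and every `x`, there is `k ∈ κ(x)` with `d∞(g,k) = g x`. -/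
lemma exists_kappa_dInfty {d : Y → Y → ℝ} (hd : IsDistance d) {g : Y → ℝ}
    (hg : g ∈ Td d) (x : Y) :
    ∃ k, (k ∈ Td d ∧ k x = 0) ∧ dInfty g k = ENNReal.ofReal (g x) := by
  classical
  obtain ⟨hd0, hdsymm, hddiag⟩ := hd
  have hgP := hg.1
  have hg0 : ∀ y, 0 ≤ g y := Pd_nonneg hddiag hgP
  set p : Y → ℝ := fun y => if y = x then 0 else max (d x y) (g y + g x) with hp
  have hpPd : p ∈ Pd d := by
    intro y z
    by_cases hy : y = x <;> by_cases hz : z = x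
    · subst hy; subst hz
      simp only [hp, if_pos rfl]
      rw [hddiag]
      linarith
    · subst hy
      simp only [hp, if_pos rfl, if_neg hz]
      have h1 : d y z ≤ max (d y z) (g z + g y) := le_max_left _ _
      linarith
    · subst hz
      simp only [hp, if_pos rfl, if_neg hy]
      have h1 : d z y ≤ max (d z y) (g y + g z) := le_max_left _ _
      rw [hdsymm y z]
      linarith
    · simp only [hp, if_neg hy, if_neg hz]
      have h1 : g y + g x ≤ max (d x y) (g y + g x) := le_max_right _ _
      have h2 : g z + g x ≤ max (d x z) (g z + g x) := le_max_right _ _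
      have h3 := hgP y z
      have h4 := hg0 x
      linarith
  obtain ⟨k, hkTd, hkp⟩ := exists_Td_le hddiag hpPd
  have hkx : k x = 0 := by
    have h1 := hkp x
    simp only [hp, if_pos rfl] at h1
    exact le_antisymm h1 (Pd_nonneg hddiag hkTd.1 x)
  have hp_sub : ∀ z, p z - g z ≤ g x := by
    intro z
    by_cases hz : z = x
    · subst hz
      simp only [hp, if_pos rfl]
      linarith [hg0 z]
    · simp only [hp, if_neg hz]
      rcases max_cases (d x z) (g z + g x) with ⟨heq, _⟩ | ⟨heq, _⟩ <;> rw [heq]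
      · linarith [hgP x z]
      · linarith
  have hupper : ∀ y, k y - g y ≤ g x := fun y => by
    have h1 := hkp y
    have h2 := hp_sub y
    linarith
  have hlower : ∀ y, g y - k y ≤ g x := by
    intro y
    have hk0 : 0 ≤ k y := Pd_nonneg hddiag hkTd.1 y
    have hstep : ∀ ε : ℝ, 0 < ε → g y - k y ≤ g x + ε := by
      intro ε hε
      rcases extremal_of_mem_Td hddiag hdsymm hg y ε hε with h | ⟨z, hz⟩
      · linarith [hg0 x]
      · have h1 := hkTd.1 y z
        have h2 := hkp z
        have h3 := hp_sub z
        linarith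
    by_contra hcon
    push_neg at hcon
    have := hstep ((g y - k y - g x) / 2) (by linarith)
    linarith
  have habs : ∀ y, |g y - k y| ≤ g x := fun y =>
    abs_le.2 ⟨by linarith [hupper y], hlower y⟩
  refine ⟨k, ⟨hkTd, hkx⟩, le_antisymm (dInfty_le_ofReal habs) ?_⟩
  have h := edist_le_dInfty g k x
  rwa [edist_dist, Real.dist_eq, hkx, sub_zero, abs_of_nonneg (hg0 x)] at h

/-- The induced metric on `K`. -/
noncomputable def dKf (d : Y → Y → ℝ) : ↥(Kset d) → ↥(Kset d) → ℝ :=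
  fun k₁ k₂ => (dInfty (k₁ : Y → ℝ) (k₂ : Y → ℝ)).toReal

lemma PK_eq (d : Y → Y → ℝ) : PK d = Pd (dKf d) := rfl

lemma TK_eq (d : Y → Y → ℝ) : TK d = Td (dKf d) := rfl

lemma psiK_eq (d : Y → Y → ℝ) (f : Y → ℝ) (k : ↥(Kset d)) :
    psiK d f k = (dInfty f (k : Y → ℝ)).toReal := rfl

lemma dKf_eq (d : Y → Y → ℝ) (k₁ k₂ : ↥(Kset d)) :
    dKf d k₁ k₂ = (dInfty (k₁ : Y → ℝ) (k₂ : Y → ℝ)).toReal := rfl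

end MoreAux

/-- If `(T_d, d∞)` is a metric space then `ψ(f)(k) = d∞(f,k)` maps `T_d`
bijectively onto the metric tight span `T_K` of `(K, d∞)`, where
`K = ⋃_x κ(x)`, and `ψ` preserves `d∞`; in particular `(T_d, d∞)` is
isometric to `(T_K, d∞)`. -/
theorem statement8 {X : Type*} [Nonempty X] (d : X → X → ℝ)
    (hd : IsDistance d) (hne : (Td d).Nonempty)
    (hfin : ∀ f ∈ Td d, ∀ g ∈ Td d, dInfty f g ≠ ⊤) :
    Set.BijOn (psiK d) (Td d) (TK d) ∧
    ∀ f ∈ Td d, ∀ g ∈ Td d, dInfty (psiK d f) (psiK d g) = dInfty f g := by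
  obtain ⟨hd0, hdsymm, hddiag⟩ := hd
  have hdI : IsDistance d := ⟨hd0, hdsymm, hddiag⟩
  have hKdiag : ∀ k : ↥(Kset d), dKf d k k = 0 := by
    intro k
    simp [dKf, dInfty]
  have hKTd : ∀ k : ↥(Kset d), (k : X → ℝ) ∈ Td d := by
    rintro ⟨k, hk⟩
    simp only [Kset, Set.mem_iUnion] at hk
    obtain ⟨x, hx⟩ := hk
    exact hx.1
  have hK0 : ∀ (k : ↥(Kset d)) (x : X), 0 ≤ (k : X → ℝ) x := fun k x =>
    Pd_nonneg hddiag (hKTd k).1 x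
  have hTd0 : ∀ g ∈ Td d, ∀ x : X, 0 ≤ g x := fun g hg x => Pd_nonneg hddiag hg.1 x
  obtain ⟨f₀, hf₀⟩ := hne
  have hKne : Nonempty ↥(Kset d) := by
    obtain ⟨x⟩ := ‹Nonempty X›
    obtain ⟨k, hk, -⟩ := exists_kappa_dInfty hdI hf₀ x
    exact ⟨⟨k, Set.mem_iUnion.2 ⟨x, hk⟩⟩⟩
  have hfinK : ∀ f ∈ Td d, ∀ k : ↥(Kset d), dInfty f (k : X → ℝ) ≠ ⊤ :=
    fun f hf k => hfin f hf _ (hKTd k)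
  have hfinKK : ∀ k₁ k₂ : ↥(Kset d), dInfty (k₁ : X → ℝ) (k₂ : X → ℝ) ≠ ⊤ :=
    fun k₁ k₂ => hfin _ (hKTd k₁) _ (hKTd k₂)
  have lemB : ∀ g ∈ Td d, ∀ x : X, ∃ k : ↥(Kset d),
      dInfty g (k : X → ℝ) = ENNReal.ofReal (g x) ∧ (k : X → ℝ) x = 0 := by
    intro g hg x
    obtain ⟨k, hk, hdk⟩ := exists_kappa_dInfty hdI hg x
    exact ⟨⟨k, Set.mem_iUnion.2 ⟨x, hk⟩⟩, hdk, hk.2⟩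
  -- ψ maps into T_K
  have hMaps : ∀ f ∈ Td d, psiK d f ∈ TK d := by
    intro f hf
    rw [TK_eq]
    have hfP : psiK d f ∈ Pd (dKf d) := by
      intro k₁ k₂
      have ht : dInfty (k₁ : X → ℝ) (k₂ : X → ℝ)
          ≤ dInfty f (k₁ : X → ℝ) + dInfty f (k₂ : X → ℝ) := by
        rw [dInfty_symm f (k₁ : X → ℝ)]
        exact dInfty_triangle _ f _
      exact toReal_triangle ht (hfinK f hf k₁) (hfinK f hf k₂)
    refine mem_Td_of_extremal hKdiag hfP ?_
    intro k₀ ε hε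
    by_cases ha : psiK d f k₀ < ε
    · exact Or.inl ha
    right
    push_neg at ha
    have hfk₀ : dInfty f (k₀ : X → ℝ) ≠ ⊤ := hfinK f hf k₀
    have hane : dInfty f (k₀ : X → ℝ) = ENNReal.ofReal (psiK d f k₀) :=
      (ENNReal.ofReal_toReal hfk₀).symm
    have hay : ∃ y, psiK d f k₀ - ε / 4 < |f y - (k₀ : X → ℝ) y| := by
      by_contra hcon
      push_neg at hcon
      have h1 : dInfty f (k₀ : X → ℝ) ≤ ENNReal.ofReal (psiK d f k₀ - ε / 4) :=
        dInfty_le_ofReal fun y => hcon y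
      rw [hane] at h1
      have h2 := (ENNReal.ofReal_le_ofReal_iff (by linarith)).1 h1
      linarith
    obtain ⟨y, hy⟩ := hay
    rcases le_total (f y) ((k₀ : X → ℝ) y) with hcase | hcase
    · -- f is below k₀ at y
      obtain ⟨k, hdk, hk0⟩ := lemB f hf y
      refine ⟨k, ?_⟩
      have hψk : psiK d f k = f y := by
        rw [psiK_eq, hdk, ENNReal.toReal_ofReal (hTd0 f hf y)]
      have habs : |f y - (k₀ : X → ℝ) y| = (k₀ : X → ℝ) y - f y := by
        rw [abs_sub_comm]
        exact abs_of_nonneg (by linarith)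
      have hbound : (k₀ : X → ℝ) y - (k : X → ℝ) y ≤ dKf d k₀ k := by
        have h2 := abs_le_toReal_dInfty (hfinKK k₀ k) y
        rw [dKf_eq]
        exact (le_abs_self _).trans h2
      rw [hk0, sub_zero] at hbound
      rw [hψk]
      rw [habs] at hy
      linarith
    · -- f is above k₀ at y
      have hfy : psiK d f k₀ - ε / 4 < f y - (k₀ : X → ℝ) y := by
        rwa [abs_of_nonneg (by linarith)] at hy
      have hfypos : 0 < f y := by
        have := hK0 k₀ y
        linarith
      rcases extremal_of_mem_Td hddiag hdsymm hf y (ε / 4) (by linarith) with h | ⟨z, hz⟩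
      · linarith [hK0 k₀ y]
      obtain ⟨k, hdk, hk0⟩ := lemB f hf z
      refine ⟨k, ?_⟩
      have hψk : psiK d f k = f z := by
        rw [psiK_eq, hdk, ENNReal.toReal_ofReal (hTd0 f hf z)]
      have hky : d y z ≤ (k : X → ℝ) y := by
        have h1 := (hKTd k).1 y z
        rw [hk0] at h1
        linarith
      have hbound : (k : X → ℝ) y - (k₀ : X → ℝ) y ≤ dKf d k₀ k := by
        have h2 := abs_le_toReal_dInfty (hfinKK k₀ k) y
        rw [dKf_eq]
        calc (k : X → ℝ) y - (k₀ : X → ℝ) y ≤ |(k₀ : X → ℝ) y - (k : X → ℝ) y| := by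
              rw [abs_sub_comm]; exact le_abs_self _
          _ ≤ _ := h2
      rw [hψk]
      linarith
  -- injectivity
  have hInj : Set.InjOn (psiK d) (Td d) := by
    have hle : ∀ (f' g' : X → ℝ), f' ∈ Td d → g' ∈ Td d → psiK d f' = psiK d g' →
        ∀ x, f' x ≤ g' x := by
      intro f' g' hf' hg' hψ x
      obtain ⟨k, hdk, hk0⟩ := lemB g' hg' x
      have h1 : psiK d g' k = g' x := by
        rw [psiK_eq, hdk, ENNReal.toReal_ofReal (hTd0 g' hg' x)]
      have h2 : f' x ≤ psiK d f' k := by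
        have h3 := abs_le_toReal_dInfty (hfinK f' hf' k) x
        rw [hk0, sub_zero] at h3
        rw [psiK_eq]
        exact (le_abs_self _).trans h3
      rw [hψ, h1] at h2
      exact h2
    intro f hf g hg hfg
    funext x
    exact le_antisymm (hle f g hf hg hfg x) (hle g f hg hf hfg.symm x)
  -- surjectivity
  have hSurj : Set.SurjOn (psiK d) (Td d) (TK d) := by
    intro F hF
    rw [TK_eq] at hF
    obtain ⟨hFP, hFmin⟩ := hF
    have hF0 : ∀ k, 0 ≤ F k := fun k => Pd_nonneg hKdiag hFP k
    haveI := hKne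
    set f₁ : X → ℝ := fun x => ⨅ k : ↥(Kset d), (F k + (k : X → ℝ) x) with hf₁
    have hbdd : ∀ x, BddBelow (Set.range fun k : ↥(Kset d) => F k + (k : X → ℝ) x) := by
      intro x
      refine ⟨0, ?_⟩
      rintro r ⟨k, rfl⟩
      exact add_nonneg (hF0 k) (hK0 k x)
    have hf₁le : ∀ (k : ↥(Kset d)) (x : X), f₁ x ≤ F k + (k : X → ℝ) x := fun k x =>
      ciInf_le (hbdd x) k
    have hf₁P : f₁ ∈ Pd d := by
      intro x y
      have key : ∀ k k' : ↥(Kset d),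
          d x y ≤ (F k + (k : X → ℝ) x) + (F k' + (k' : X → ℝ) y) := by
        intro k k'
        have h1 := (hKTd k).1 x y
        have h2 : (k : X → ℝ) y - (k' : X → ℝ) y
            ≤ (dInfty (k : X → ℝ) (k' : X → ℝ)).toReal :=
          (le_abs_self _).trans (abs_le_toReal_dInfty (hfinKK k k') y)
        have h3 := hFP k k'
        rw [dKf_eq] at h3
        linarith
      have h1 : d x y - f₁ y ≤ f₁ x := by
        apply le_ciInf
        intro k
        have h2 : d x y - (F k + (k : X → ℝ) x) ≤ f₁ y := by
          apply le_ciInf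
          intro k'
          linarith [key k k']
        linarith
      linarith
    obtain ⟨f', hf'Td, hf'le⟩ := exists_Td_le hddiag hf₁P
    have hA : ∀ (k : ↥(Kset d)) (y : X), f' y - (k : X → ℝ) y ≤ F k := by
      intro k y
      have h1 := hf'le y
      have h2 := hf₁le k y
      linarith
    have hub : ∀ k : ↥(Kset d), dInfty f' (k : X → ℝ) ≤ ENNReal.ofReal (F k) := by
      intro k
      apply dInfty_le_ofReal
      intro y
      have hB : (k : X → ℝ) y - f' y ≤ F k := by
        have hstep : ∀ ε : ℝ, 0 < ε → (k : X → ℝ) y - f' y ≤ F k + ε := by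
          intro ε hε
          rcases extremal_of_mem_Td hddiag hdsymm (hKTd k) y ε hε with h | ⟨z, hz⟩
          · have := hTd0 f' hf'Td y
            linarith [hF0 k]
          · have h1 := hf'Td.1 y z
            have hAz := hA k z
            linarith
        by_contra hcon
        push_neg at hcon
        linarith [hstep ((((k : X → ℝ) y - f' y) - F k) / 2) (by linarith)]
      exact abs_le.2 ⟨by linarith [hB], hA k y⟩
    have hubR : ∀ k, psiK d f' k ≤ F k := by
      intro k
      have h := ENNReal.toReal_mono ENNReal.ofReal_ne_top (hub k)
      rw [ENNReal.toReal_ofReal (hF0 k)] at h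
      exact h
    have hf'P : psiK d f' ∈ Pd (dKf d) := by
      intro k₁ k₂
      have ht : dInfty (k₁ : X → ℝ) (k₂ : X → ℝ)
          ≤ dInfty f' (k₁ : X → ℝ) + dInfty f' (k₂ : X → ℝ) := by
        rw [dInfty_symm f' (k₁ : X → ℝ)]
        exact dInfty_triangle _ f' _
      exact toReal_triangle ht (hfinK f' hf'Td k₁) (hfinK f' hf'Td k₂)
    have hFeq : psiK d f' = F := hFmin (psiK d f') hf'P fun k => hubR k
    exact ⟨f', hf'Td, hFeq⟩
  -- isometry
  have hIso : ∀ f ∈ Td d, ∀ g ∈ Td d, dInfty (psiK d f) (psiK d g) = dInfty f g := by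
    have main : ∀ (f g : X → ℝ), f ∈ Td d → g ∈ Td d → ∀ x, g x ≤ f x →
        edist (f x) (g x) ≤ dInfty (psiK d f) (psiK d g) := by
      intro f g hf hg x hgf
      obtain ⟨k, hdk, hk0⟩ := lemB g hg x
      have hψg : psiK d g k = g x := by
        rw [psiK_eq, hdk, ENNReal.toReal_ofReal (hTd0 g hg x)]
      have hψf : f x ≤ psiK d f k := by
        have h3 := abs_le_toReal_dInfty (hfinK f hf k) x
        rw [hk0, sub_zero] at h3
        rw [psiK_eq]
        exact (le_abs_self _).trans h3
      have h4 : edist (f x) (g x) ≤ edist (psiK d f k) (psiK d g k) := by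
        rw [edist_dist, Real.dist_eq, edist_dist, Real.dist_eq]
        apply ENNReal.ofReal_le_ofReal
        rw [hψg, abs_of_nonneg (by linarith : (0:ℝ) ≤ f x - g x)]
        calc f x - g x ≤ psiK d f k - g x := by linarith
          _ ≤ |psiK d f k - g x| := le_abs_self _
      exact h4.trans (edist_le_dInfty (psiK d f) (psiK d g) k)
    intro f hf g hg
    apply le_antisymm
    · refine dInfty_le_of_forall fun k => ?_
      have hfg := hfin f hf g hg
      have r1 : (dInfty f (k : X → ℝ)).toReal
          ≤ (dInfty f g).toReal + (dInfty g (k : X → ℝ)).toReal :=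
        toReal_triangle (dInfty_triangle f g (k : X → ℝ)) hfg (hfinK g hg k)
      have r2 : (dInfty g (k : X → ℝ)).toReal
          ≤ (dInfty f g).toReal + (dInfty f (k : X → ℝ)).toReal := by
        have hgf : dInfty g f ≠ ⊤ := by rw [dInfty_symm g f]; exact hfg
        have t := toReal_triangle (dInfty_triangle g f (k : X → ℝ)) hgf (hfinK f hf k)
        rwa [dInfty_symm g f] at t
      have h1 : |psiK d f k - psiK d g k| ≤ (dInfty f g).toReal := by
        rw [psiK_eq, psiK_eq]
        exact abs_le.2 ⟨by linarith, by linarith⟩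
      rw [edist_dist, Real.dist_eq]
      calc ENNReal.ofReal |psiK d f k - psiK d g k|
          ≤ ENNReal.ofReal (dInfty f g).toReal := ENNReal.ofReal_le_ofReal h1
        _ = dInfty f g := ENNReal.ofReal_toReal hfg
    · refine dInfty_le_of_forall fun x => ?_
      rcases le_total (g x) (f x) with h | h
      · exact main f g hf hg x h
      · have h2 := main g f hg hf x h
        rw [edist_comm]
        rwa [dInfty_symm (psiK d g) (psiK d f)] at h2
  exact ⟨⟨fun f hf => hMaps f hf, hInj, hSurj⟩, hIso⟩
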